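/- For reals 0 ≤ t with t·log y ≤ 1 and 2 ≤ x ≤ y, the integral ∫_{log x}^{log y} cos(tu)/u du = log(log y/log x) + O(1); if t·log x ≤ 1 < t·log y then it equals log(1/(t log x)) + O(1); and if t·log x > 1 the integral is O(1). In all cases ∫_{log x}^{log y} cos(tu)/u du = log(1 + min{log y/log x, 1/(t log x)}) + O(1). -/

import Mathlib

open MeasureTheory


private lemma int_cos_div {t a b : ℝ} (h : (0:ℝ) ∉ Set.uIcc a b) :
    IntervalIntegrable (fun u => Real.cos (t * u) / u) volume a b :=
  (ContinuousOn.div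
    ((Real.continuous_cos.comp (continuous_const.mul continuous_id)).continuousOn)
    continuousOn_id (fun x hx h0 => h (h0 ▸ hx))).intervalIntegrable

private lemma not_zero_mem {a b : ℝ} (ha : 0 < a) (hab : a ≤ b) : (0:ℝ) ∉ Set.uIcc a b := by
  rw [Set.uIcc_of_le hab]
  rintro ⟨h1, h2⟩; linarith

private lemma lemA {t a b : ℝ} (ha : 0 < a) (hab : a ≤ b) (ht : 0 ≤ t) (htb : t * b ≤ 1) :
    |(∫ u in a..b, Real.cos (t * u) / u) - Real.log (b / a)| ≤ 1/2 := by
  have hb : 0 < b := lt_of_lt_of_le ha hab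
  have h0 := not_zero_mem ha hab
  have hint1 := int_cos_div (t := t) h0
  have hint2 : IntervalIntegrable (fun u : ℝ => 1 / u) volume a b :=
    (ContinuousOn.div continuousOn_const continuousOn_id
      (fun x hx h' => h0 (h' ▸ hx))).intervalIntegrable
  rw [← integral_one_div h0, ← intervalIntegral.integral_sub hint1 hint2]
  have hptw : ∀ u ∈ Set.uIoc a b, ‖Real.cos (t*u)/u - 1/u‖ ≤ t^2 * b / 2 := by
    intro u hu
    rw [Set.uIoc_of_le hab] at hu
    have hu0 : 0 < u := lt_trans ha hu.1
    have h1 : Real.cos (t*u)/u - 1/u = (Real.cos (t*u) - 1)/u := by ring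
    rw [h1, Real.norm_eq_abs, abs_div, abs_of_pos hu0]
    have h2 : 1 - (t*u)^2/2 ≤ Real.cos (t*u) := Real.one_sub_sq_div_two_le_cos
    have h3 : Real.cos (t*u) ≤ 1 := Real.cos_le_one _
    have h4 : |Real.cos (t*u) - 1| ≤ (t*u)^2/2 := by rw [abs_le]; constructor <;> nlinarith
    rw [div_le_iff₀ hu0]
    have hub : u ≤ b := hu.2
    nlinarith
  calc |∫ u in a..b, (Real.cos (t*u)/u - 1/u)|
      ≤ t^2 * b / 2 * |b - a| :=
        intervalIntegral.norm_integral_le_of_norm_le_const hptw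
    _ ≤ 1/2 := by
        rw [abs_of_nonneg (by linarith)]
        have key : t^2 * b * b ≤ 1 := by nlinarith [mul_nonneg ht hb.le]
        nlinarith [mul_nonneg (mul_nonneg (sq_nonneg t) hb.le) ha.le]

private lemma lemB {t a b : ℝ} (ha : 0 < a) (hab : a ≤ b) (ht : 0 < t) (hta : 1 ≤ t * a) :
    |∫ u in a..b, Real.cos (t * u) / u| ≤ 3 := by
  have hb : 0 < b := lt_of_lt_of_le ha hab
  have hmem : ∀ x ∈ Set.uIcc a b, 0 < x := by
    intro x hx
    rw [Set.uIcc_of_le hab] at hx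
    linarith [hx.1]
  have hU : ∀ x ∈ Set.uIcc a b, HasDerivAt (fun x : ℝ => x⁻¹) (-(x^2)⁻¹) x :=
    fun x hx => hasDerivAt_inv (hmem x hx).ne'
  have hV : ∀ x ∈ Set.uIcc a b, HasDerivAt (fun x : ℝ => Real.sin (t*x) / t) (Real.cos (t*x)) x := by
    intro x _
    have h0 : HasDerivAt (fun x : ℝ => t * x) t x := by
      simpa using (hasDerivAt_id x).const_mul t
    have h1 : HasDerivAt (fun x : ℝ => Real.sin (t*x)) (Real.cos (t*x) * t) x :=
      (Real.hasDerivAt_sin (t*x)).comp x h0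
    have := h1.div_const t
    simpa [mul_div_assoc, mul_div_cancel_right₀ _ ht.ne'] using this
  have hint1 : IntervalIntegrable (fun x : ℝ => -(x^2)⁻¹) volume a b := by
    apply ContinuousOn.intervalIntegrable
    exact (ContinuousOn.inv₀ (continuousOn_pow 2) (fun x hx => pow_ne_zero _ (hmem x hx).ne')).neg
  have hint2 : IntervalIntegrable (fun x : ℝ => Real.cos (t*x)) volume a b :=
    (Real.continuous_cos.comp (continuous_const.mul continuous_id)).intervalIntegrable _ _
  have ibp := intervalIntegral.integral_mul_deriv_eq_deriv_mul hU hV hint1 hint2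
  have heq : (∫ u in a..b, Real.cos (t * u) / u) =
      (∫ x in a..b, x⁻¹ * Real.cos (t*x)) := by
    apply intervalIntegral.integral_congr
    intro x _
    show Real.cos (t*x) / x = x⁻¹ * Real.cos (t*x)
    rw [div_eq_mul_inv, mul_comm]
  rw [heq, ibp]
  -- boundary terms
  have hbd : ∀ c : ℝ, 0 < c → 1 ≤ t * c → |c⁻¹ * (Real.sin (t*c) / t)| ≤ 1 := by
    intro c hc htc
    rw [abs_mul, abs_div, abs_of_pos (inv_pos.2 hc), abs_of_pos ht]
    have h1 : |Real.sin (t*c)| ≤ 1 := Real.abs_sin_le_one _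
    have htc0 : 0 < t * c := by linarith
    calc c⁻¹ * (|Real.sin (t*c)| / t) ≤ c⁻¹ * (1 / t) := by
          apply mul_le_mul_of_nonneg_left _ (inv_pos.2 hc).le
          exact div_le_div_of_nonneg_right h1 ht.le
      _ = 1 / (t * c) := by rw [one_div, one_div, mul_inv]; ring
      _ ≤ 1 := by rw [div_le_one htc0]; linarith
  -- tail integral
  have hJ : (∫ x in a..b, (x^2)⁻¹) = a⁻¹ - b⁻¹ := by
    have hder : ∀ x ∈ Set.uIcc a b, HasDerivAt (fun x : ℝ => -x⁻¹) ((x^2)⁻¹) x := by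
      intro x hx
      have h := (hasDerivAt_inv (hmem x hx).ne').neg
      rw [neg_neg] at h
      exact h
    have hint3 : IntervalIntegrable (fun x : ℝ => (x^2)⁻¹) volume a b := by
      apply ContinuousOn.intervalIntegrable
      exact ContinuousOn.inv₀ (continuousOn_pow 2) (fun x hx => pow_ne_zero _ (hmem x hx).ne')
    rw [intervalIntegral.integral_eq_sub_of_hasDerivAt hder hint3]
    ring
  have e1 : a⁻¹ ≤ t := by
    have := mul_le_mul_of_nonneg_right hta (inv_pos.2 ha).le
    rwa [one_mul, mul_assoc, mul_inv_cancel₀ ha.ne', mul_one] at this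
  have htail : |∫ x in a..b, -(x^2)⁻¹ * (Real.sin (t*x) / t)| ≤ 1 := by
    have hcontf : ContinuousOn (fun x : ℝ => -(x^2)⁻¹ * (Real.sin (t*x) / t)) (Set.uIcc a b) :=
      ((ContinuousOn.inv₀ (continuousOn_pow 2)
        (fun x hx => pow_ne_zero _ (hmem x hx).ne')).neg).mul
        (((Real.continuous_sin.comp (continuous_const.mul continuous_id)).div_const t).continuousOn)
    have hintf : IntervalIntegrable (fun x : ℝ => -(x^2)⁻¹ * (Real.sin (t*x) / t)) volume a b :=
      hcontf.intervalIntegrable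
    have hintg : IntervalIntegrable (fun x : ℝ => (x^2)⁻¹ * (1/t)) volume a b := by
      apply ContinuousOn.intervalIntegrable
      exact (ContinuousOn.inv₀ (continuousOn_pow 2)
        (fun x hx => pow_ne_zero _ (hmem x hx).ne')).mul continuousOn_const
    have h1 : |∫ x in a..b, -(x^2)⁻¹ * (Real.sin (t*x) / t)| ≤
        ∫ x in a..b, |(fun x : ℝ => -(x^2)⁻¹ * (Real.sin (t*x) / t)) x| := by
      have := intervalIntegral.norm_integral_le_integral_norm
        (f := fun x : ℝ => -(x^2)⁻¹ * (Real.sin (t*x) / t)) (μ := volume) hab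
      simp only [Real.norm_eq_abs] at this
      exact this
    have h2 : (∫ x in a..b, |(fun x : ℝ => -(x^2)⁻¹ * (Real.sin (t*x) / t)) x|) ≤
        ∫ x in a..b, (x^2)⁻¹ * (1/t) := by
      apply intervalIntegral.integral_mono_on hab hintf.abs hintg
      intro x hx
      have hx0 : 0 < x := hmem x (by rw [Set.uIcc_of_le hab]; exact hx)
      have hx2 : (0:ℝ) < (x^2)⁻¹ := inv_pos.2 (by positivity)
      simp only [abs_mul, abs_neg, abs_div, abs_of_pos hx2, abs_of_pos ht]
      apply mul_le_mul_of_nonneg_left _ hx2.le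
      rw [div_le_div_iff₀ ht ht, one_mul]
      have := Real.abs_sin_le_one (t*x)
      nlinarith
    have h3 : (∫ x in a..b, (x^2)⁻¹ * (1/t)) ≤ 1 := by
      rw [intervalIntegral.integral_mul_const, hJ]
      have hb' : (0:ℝ) < b⁻¹ := inv_pos.2 hb
      calc (a⁻¹ - b⁻¹) * (1/t) ≤ t * (1/t) := by
            apply mul_le_mul_of_nonneg_right (by linarith) (by positivity)
        _ = 1 := by field_simp
    linarith
  have hB1 := hbd b hb (le_trans hta (by nlinarith))
  have hB2 := hbd a ha hta
  calc |b⁻¹ * (Real.sin (t*b)/t) - a⁻¹ * (Real.sin (t*a)/t)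
        - ∫ x in a..b, -(x^2)⁻¹ * (Real.sin (t*x)/t)|
      ≤ |b⁻¹ * (Real.sin (t*b)/t)| + |a⁻¹ * (Real.sin (t*a)/t)|
        + |∫ x in a..b, -(x^2)⁻¹ * (Real.sin (t*x)/t)| := by
        exact (abs_sub _ _).trans (by gcongr; exact abs_sub _ _)
    _ ≤ 3 := by linarith

private lemma lemC {t a b : ℝ} (ha : 0 < a) (hab : a ≤ b) (ht1 : t * a ≤ 1) (ht2 : 1 < t * b) :
    |(∫ u in a..b, Real.cos (t * u) / u) - Real.log (1 / (t * a))| ≤ 4 := by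
  have hb : 0 < b := lt_of_lt_of_le ha hab
  have ht : 0 < t := by nlinarith
  set c : ℝ := 1/t with hc
  have hc0 : 0 < c := by positivity
  have hac : a ≤ c := by rw [hc, le_div_iff₀ ht]; linarith [mul_comm t a]
  have hcb : c ≤ b := by rw [hc, div_le_iff₀ ht]; nlinarith
  have hsplit : (∫ u in a..c, Real.cos (t*u)/u) + (∫ u in c..b, Real.cos (t*u)/u)
      = ∫ u in a..b, Real.cos (t*u)/u :=
    intervalIntegral.integral_add_adjacent_intervals
      (int_cos_div (not_zero_mem ha hac)) (int_cos_div (not_zero_mem hc0 hcb))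
  have htc : t * c = 1 := by rw [hc]; field_simp
  have hA := lemA ha hac ht.le (le_of_eq htc)
  have hB := lemB hc0 hcb ht (le_of_eq htc.symm)
  have hlog : Real.log (c / a) = Real.log (1 / (t * a)) := by
    rw [hc, div_div]
  rw [← hsplit]
  rw [hlog] at hA
  calc |(∫ u in a..c, Real.cos (t*u)/u) + (∫ u in c..b, Real.cos (t*u)/u)
        - Real.log (1/(t*a))|
      ≤ |(∫ u in a..c, Real.cos (t*u)/u) - Real.log (1/(t*a))|
        + |∫ u in c..b, Real.cos (t*u)/u| := by
        have := abs_add_le ((∫ u in a..c, Real.cos (t*u)/u) - Real.log (1/(t*a)))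
          (∫ u in c..b, Real.cos (t*u)/u)
        calc _ = |(∫ u in a..c, Real.cos (t*u)/u) - Real.log (1/(t*a))
            + (∫ u in c..b, Real.cos (t*u)/u)| := by congr 1; ring
          _ ≤ _ := this
    _ ≤ 4 := by linarith

/-- Estimates for `∫_{log x}^{log y} cos(tu)/u du` with `2 ≤ x ≤ y` and
`t ≥ 0`: if `t log y ≤ 1` it equals `log(log y/log x) + O(1)`; if `t log x ≤ 1 < t log y`
it equals `log(1/(t log x)) + O(1)`; if `t log x > 1` it is `O(1)`; and in all cases
(for `t > 0`) it equals `log(1 + min{log y/log x, 1/(t log x)}) + O(1)`. -/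
theorem cos_integral_estimates :
    ∃ C : ℝ, 0 < C ∧
      ∀ t x y : ℝ, 0 ≤ t → 2 ≤ x → x ≤ y →
        (t * Real.log y ≤ 1 →
          |(∫ u in Set.Icc (Real.log x) (Real.log y), Real.cos (t * u) / u) -
              Real.log (Real.log y / Real.log x)| ≤ C) ∧
        (t * Real.log x ≤ 1 → 1 < t * Real.log y →
          |(∫ u in Set.Icc (Real.log x) (Real.log y), Real.cos (t * u) / u) -
              Real.log (1 / (t * Real.log x))| ≤ C) ∧
        (1 < t * Real.log x →
          |∫ u in Set.Icc (Real.log x) (Real.log y), Real.cos (t * u) / u| ≤ C) ∧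
        (0 < t →
          |(∫ u in Set.Icc (Real.log x) (Real.log y), Real.cos (t * u) / u) -
              Real.log (1 + min (Real.log y / Real.log x) (1 / (t * Real.log x)))| ≤ C) := by
  refine ⟨5, by norm_num, fun t x y ht hx hxy => ?_⟩
  set a : ℝ := Real.log x with hadef
  set b : ℝ := Real.log y with hbdef
  have ha : 0 < a := Real.log_pos (by linarith)
  have hab : a ≤ b := Real.log_le_log (by linarith) hxy
  have hb : 0 < b := lt_of_lt_of_le ha hab
  have hIcc : (∫ u in Set.Icc a b, Real.cos (t * u) / u)
      = ∫ u in a..b, Real.cos (t * u) / u := by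
    rw [MeasureTheory.integral_Icc_eq_integral_Ioc, intervalIntegral.integral_of_le hab]
  rw [hIcc]
  refine ⟨fun h1 => ?_, fun h1 h2 => ?_, fun h1 => ?_, fun htpos => ?_⟩
  · linarith [lemA ha hab ht h1]
  · linarith [lemC ha hab h1 h2]
  · have ht' : 0 < t := by nlinarith
    have h2 : 1 ≤ t * a := h1.le
    linarith [lemB ha hab ht' h2]
  · -- case 4
    have hba1 : 1 ≤ b/a := (one_le_div ha).2 hab
    rcases le_or_gt (t*b) 1 with h1 | h1
    · -- min = b/a
      have hmin : min (b/a) (1/(t*a)) = b/a := by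
        apply min_eq_left
        rw [div_le_div_iff₀ (by positivity : (0:ℝ) < a) (by positivity : (0:ℝ) < t*a)]
        nlinarith
      rw [hmin]
      have hA := lemA ha hab ht h1
      have hlog : |Real.log (1 + b/a) - Real.log (b/a)| ≤ 1 := by
        rw [← Real.log_div (by positivity) (by positivity)]
        have hq1 : 1 ≤ (1 + b/a)/(b/a) := by
          rw [le_div_iff₀ (by positivity)]; linarith
        rw [abs_of_nonneg (Real.log_nonneg hq1)]
        calc Real.log ((1 + b/a)/(b/a)) ≤ (1 + b/a)/(b/a) - 1 :=
              Real.log_le_sub_one_of_pos (by positivity)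
          _ = 1/(b/a) := by field_simp; ring
          _ ≤ 1 := by rw [div_le_one (by positivity)]; linarith
      calc |(∫ u in a..b, Real.cos (t*u)/u) - Real.log (1 + b/a)|
          ≤ |(∫ u in a..b, Real.cos (t*u)/u) - Real.log (b/a)|
            + |Real.log (1 + b/a) - Real.log (b/a)| := by
            rw [abs_sub_comm (Real.log (1 + b/a))]
            exact abs_sub_le _ _ _
        _ ≤ 5 := by linarith
    · -- 1 < t*b, min = 1/(t*a)
      have hmin : min (b/a) (1/(t*a)) = 1/(t*a) := by
        apply min_eq_right
        rw [div_le_div_iff₀ (by positivity) ha]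
        nlinarith
      rw [hmin]
      set m : ℝ := 1/(t*a) with hm
      have hm0 : 0 < m := by positivity
      rcases le_or_gt (t*a) 1 with h2 | h2
      · have hC := lemC ha hab h2 h1
        have hm1 : 1 ≤ m := by rw [hm, le_div_iff₀ (by positivity)]; linarith
        have hlog : |Real.log (1 + m) - Real.log m| ≤ 1 := by
          rw [← Real.log_div (by positivity) (by positivity)]
          have hq1 : 1 ≤ (1 + m)/m := by rw [le_div_iff₀ hm0]; linarith
          rw [abs_of_nonneg (Real.log_nonneg hq1)]
          calc Real.log ((1 + m)/m) ≤ (1 + m)/m - 1 :=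
                Real.log_le_sub_one_of_pos (by positivity)
            _ = 1/m := by field_simp; ring
            _ ≤ 1 := by rw [div_le_one hm0]; linarith
        calc |(∫ u in a..b, Real.cos (t*u)/u) - Real.log (1 + m)|
            ≤ |(∫ u in a..b, Real.cos (t*u)/u) - Real.log m|
              + |Real.log (1 + m) - Real.log m| := by
              rw [abs_sub_comm (Real.log (1 + m))]
              exact abs_sub_le _ _ _
          _ ≤ 5 := by linarith
      · have hB := lemB ha hab htpos h2.le
        have hlog : |Real.log (1 + m)| ≤ 1 := by
          rw [abs_of_nonneg (Real.log_nonneg (by linarith))]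
          have hmle : m ≤ 1 := by rw [hm, div_le_one (by positivity)]; linarith
          calc Real.log (1 + m) ≤ (1 + m) - 1 :=
                Real.log_le_sub_one_of_pos (by positivity)
            _ = m := by ring
            _ ≤ 1 := hmle
        calc |(∫ u in a..b, Real.cos (t*u)/u) - Real.log (1 + m)|
            ≤ |(∫ u in a..b, Real.cos (t*u)/u)| + |Real.log (1 + m)| :=
              abs_sub _ _
          _ ≤ 5 := by linarith
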